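/- Let p ≡ 1 (mod 8) be a prime and α ≥ 1 an integer. Let χ₄ be a complex-valued Dirichlet character mod p^α of order 4 and let φ = χ₄² be the quadratic character mod p^α. Set ξ = J(χ₄, φ). Then the double sum S(i₁,i₂,i₃) := Σ_{x: p∤x, p∤1−x} Σ_{y: p∤y, p∤1−y, p∤x−y} χ₄^{i₁}(y)·χ₄^{i₂}(1−y)·χ₄^{i₃}(x−y) (over x, y ∈ ℤ/p^αℤ) satisfies: S(1,1,1) = −2ξp^{α−1}; S(1,1,−1) = 2p^{2α−2}; S(1,−1,1) = −p^{α−1}(ξ̄ − p^{α−1}); and S(1,−1,−1) = −p^{α−1}(ξ − p^{α−1}), where ξ̄ is the complex conjugate of ξ. -/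

import Mathlib

open Finset

open scoped Classical

private lemma aux_isUnit (p α : ℕ) {q : ℕ} (hp : p.Prime) (hα : 1 ≤ α) (hq : q = p ^ α)
    [NeZero q] (hd : p ∣ q) (x : ZMod q) :
    IsUnit x ↔ ZMod.castHom hd (ZMod p) x ≠ 0 := by
  haveI : NeZero p := ⟨hp.pos.ne'⟩
  have hx : x = ((x.val : ℕ) : ZMod q) := (ZMod.natCast_rightInverse x).symm
  have key : ∀ n : ℕ, n.Coprime q ↔ p.Coprime n := by
    intro n
    rw [hq, Nat.coprime_pow_right_iff (by omega), Nat.coprime_comm]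
  rw [hx, map_natCast, ZMod.isUnit_iff_coprime, Ne, ZMod.natCast_eq_zero_iff, key]
  exact hp.coprime_iff_not_dvd

private lemma aux_fiber_card (p α : ℕ) {q : ℕ} (hp : p.Prime) (hα : 1 ≤ α) (hq : q = p ^ α)
    [NeZero q] (hd : p ∣ q) (c : ZMod p) :
    (Finset.univ.filter fun s : ZMod q => ZMod.castHom hd (ZMod p) s = c).card = p ^ (α - 1) := by
  haveI : NeZero p := ⟨hp.pos.ne'⟩
  set π := ZMod.castHom hd (ZMod p) with hπ
  have hsurj : ∀ c : ZMod p, ∃ s : ZMod q, π s = c := fun c =>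
    ⟨((c.val : ℕ) : ZMod q), by rw [hπ, map_natCast]; exact ZMod.natCast_rightInverse c⟩
  have hcc : ∀ c₁ c₂ : ZMod p,
      (Finset.univ.filter fun s : ZMod q => π s = c₁).card
        = (Finset.univ.filter fun s : ZMod q => π s = c₂).card := by
    intro c₁ c₂
    obtain ⟨s₀, hs₀⟩ := hsurj (c₂ - c₁)
    apply Finset.card_bij' (fun s _ => s + s₀) (fun s _ => s - s₀)
    · intro a ha
      simp only [Finset.mem_filter, Finset.mem_univ, true_and] at ha ⊢
      rw [map_add, ha, hs₀]; ring
    · intro a ha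
      simp only [Finset.mem_filter, Finset.mem_univ, true_and] at ha ⊢
      rw [map_sub, ha, hs₀]; ring
    · intro a _; ring
    · intro a _; ring
  have hsum : ∑ c : ZMod p, (Finset.univ.filter fun s : ZMod q => π s = c).card = q := by
    rw [Finset.sum_card_fiberwise_eq_card_filter]
    simp [ZMod.card]
  have heach : ∀ c' : ZMod p, (Finset.univ.filter fun s : ZMod q => π s = c').card
      = (Finset.univ.filter fun s : ZMod q => π s = 0).card := fun c' => hcc c' 0
  rw [Finset.sum_congr rfl (fun c' _ => heach c'), Finset.sum_const, Finset.card_univ,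
    ZMod.card, smul_eq_mul] at hsum
  rw [heach c]
  have hq' : p * (Finset.univ.filter fun s : ZMod q => π s = 0).card = p * p ^ (α - 1) := by
    rw [hsum, hq]
    conv_lhs => rw [show α = (α - 1) + 1 by omega]
    rw [pow_succ]; ring
  exact Nat.eq_of_mul_eq_mul_left hp.pos hq'

private lemma aux_fiber_sum (p α : ℕ) {q : ℕ} (hp : p.Prime) (hα : 1 ≤ α) (hq : q = p ^ α)
    [NeZero q] [NeZero p] (hd : p ∣ q) (F : ZMod p → ℂ) :
    ∑ s : ZMod q, F (ZMod.castHom hd (ZMod p) s) = (p : ℂ) ^ (α - 1) * ∑ c : ZMod p, F c := by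
  rw [← Finset.sum_fiberwise' Finset.univ (fun s : ZMod q => ZMod.castHom hd (ZMod p) s) F,
    Finset.mul_sum]
  refine Finset.sum_congr rfl fun c _ => ?_
  rw [Finset.sum_const, aux_fiber_card p α hp hα hq hd c, nsmul_eq_mul]
  push_cast
  ring

section
variable (p α : ℕ) {q : ℕ}

private lemma aux_triv (hp : p.Prime) (hp2 : p % 2 = 1) (hα : 1 ≤ α) (hq : q = p ^ α)
    [NeZero q] (hd : p ∣ q) (ψ : DirichletCharacter ℂ q) (hψ4 : ψ ^ 4 = 1) (z : ZMod q)
    (hz : IsUnit z) (h1 : ZMod.castHom hd (ZMod p) z = 1) : ψ z = 1 := by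
  haveI : NeZero p := ⟨hp.pos.ne'⟩
  obtain ⟨w, rfl⟩ := hz
  have hker : w ∈ (ZMod.unitsMap hd).ker := by
    rw [MonoidHom.mem_ker]
    ext
    exact h1
  have hcard : Nat.card (ZMod.unitsMap (n := p) hd).ker = p ^ (α - 1) := by
    have hs := ZMod.unitsMap_surjective (n := p) hd
    have hc := Subgroup.card_eq_card_quotient_mul_card_subgroup (ZMod.unitsMap (n := p) hd).ker
    rw [Nat.card_congr (QuotientGroup.quotientKerEquivOfSurjective _ hs).toEquiv,
      Nat.card_eq_fintype_card, Nat.card_eq_fintype_card, ZMod.card_units_eq_totient,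
      ZMod.card_units_eq_totient] at hc
    have ht : q.totient = p ^ (α - 1) * (p - 1) := by
      rw [hq, Nat.totient_prime_pow hp (by omega)]
    rw [ht, Nat.totient_prime hp] at hc
    have hp1 : 0 < p - 1 := by have := hp.two_le; omega
    refine Nat.eq_of_mul_eq_mul_left hp1 ?_
    rw [← hc]; ring
  have hwpow : w ^ (p ^ (α - 1)) = 1 := by
    have h := pow_card_eq_one' (G := (ZMod.unitsMap (n := p) hd).ker) (x := ⟨w, hker⟩)
    rw [hcard] at h
    have h' := congrArg (Subgroup.subtype _) h
    simpa using h'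
  have h4 : (ψ (w : ZMod q)) ^ 4 = 1 := by
    rw [← MulChar.pow_apply' ψ (by norm_num) (w : ZMod q), hψ4, MulChar.one_apply w.isUnit]
  have hk : (ψ (w : ZMod q)) ^ (p ^ (α - 1)) = 1 := by
    rw [← map_pow, ← Units.val_pow_eq_pow_val, hwpow, Units.val_one, map_one]
  have hcop : Nat.Coprime 4 (p ^ (α - 1)) := by
    have h2 : ¬ (2 ∣ p) := by omega
    have hc2 : Nat.Coprime 2 p := (Nat.prime_two.coprime_iff_not_dvd).mpr h2
    have : Nat.Coprime (2 ^ 2) (p ^ (α - 1)) := Nat.Coprime.pow _ _ hc2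
    simpa using this
  have ho1 : orderOf (ψ (w : ZMod q)) ∣ 4 := orderOf_dvd_of_pow_eq_one h4
  have ho2 : orderOf (ψ (w : ZMod q)) ∣ p ^ (α - 1) := orderOf_dvd_of_pow_eq_one hk
  have : orderOf (ψ (w : ZMod q)) = 1 := Nat.dvd_one.mp (hcop ▸ Nat.dvd_gcd ho1 ho2)
  exact orderOf_eq_one_iff.mp this

private lemma aux_factor (hp : p.Prime) (hp2 : p % 2 = 1) (hα : 1 ≤ α) (hq : q = p ^ α)
    [NeZero q] (hd : p ∣ q) (ψ : DirichletCharacter ℂ q) (hψ4 : ψ ^ 4 = 1) (s t : ZMod q)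
    (h : ZMod.castHom hd (ZMod p) s = ZMod.castHom hd (ZMod p) t) : ψ s = ψ t := by
  by_cases ht : IsUnit t
  · have hs : IsUnit s := by
      rw [aux_isUnit p α hp hα hq hd] at ht ⊢
      rw [h]; exact ht
    obtain ⟨w, rfl⟩ := ht
    have hdec : s = (w : ZMod q) * ((w⁻¹ : (ZMod q)ˣ) * s) := by
      rw [← mul_assoc, Units.mul_inv, one_mul]
    have huu : IsUnit ((w⁻¹ : (ZMod q)ˣ) * s : ZMod q) := (w⁻¹).isUnit.mul hs
    have hpi : ZMod.castHom hd (ZMod p) ((w⁻¹ : (ZMod q)ˣ) * s) = 1 := by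
      rw [map_mul, h, ← map_mul, ← Units.val_mul, inv_mul_cancel, Units.val_one, map_one]
    calc ψ s = ψ ((w : ZMod q) * ((w⁻¹ : (ZMod q)ˣ) * s)) := by rw [← hdec]
    _ = ψ (w : ZMod q) * ψ ((w⁻¹ : (ZMod q)ˣ) * s) := map_mul ψ _ _
    _ = ψ (w : ZMod q) := by
        rw [aux_triv p α hp hp2 hα hq hd ψ hψ4 _ huu hpi, mul_one]
  · have hns : ¬ IsUnit s := by
      rw [aux_isUnit p α hp hα hq hd] at ht ⊢
      rw [h]; exact ht
    rw [ψ.map_nonunit hns, ψ.map_nonunit ht]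

end


private lemma aux_sq_eq_one {p : ℕ} [Fact p.Prime] (x : ZMod p) (hx : x * x = 1) :
    x = 1 ∨ x = -1 := mul_self_eq_one_iff.mp hx

private lemma aux_fourth_root (p : ℕ) (hp : p.Prime) (hp8 : p % 8 = 1) :
    ∃ h₀ : (ZMod p)ˣ, (h₀ : ZMod p) ^ 4 = -1 := by
  haveI : Fact p.Prime := ⟨hp⟩
  obtain ⟨g, hg⟩ := IsCyclic.exists_generator (α := (ZMod p)ˣ)
  have hcard : orderOf g = p - 1 := by
    rw [orderOf_eq_card_of_forall_mem_zpowers hg, Nat.card_eq_fintype_card, ZMod.card_units]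
  obtain ⟨m, hm⟩ : ∃ m, p - 1 = 8 * m := ⟨(p - 1) / 8, by omega⟩
  have hm0 : 0 < m := by have := hp.two_le; omega
  refine ⟨g ^ m, ?_⟩
  have h2 : ((g : ZMod p) ^ m) ^ 4 * ((g : ZMod p) ^ m) ^ 4 = 1 := by
    have : (g ^ (p - 1) : (ZMod p)ˣ) = 1 := by
      rw [← hcard, pow_orderOf_eq_one]
    calc ((g : ZMod p) ^ m) ^ 4 * ((g : ZMod p) ^ m) ^ 4 = (g : ZMod p) ^ (8 * m) := by ring
    _ = ((g ^ (p - 1) : (ZMod p)ˣ) : ZMod p) := by rw [hm]; push_cast; ring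
    _ = 1 := by rw [this, Units.val_one]
  have hne : ((g : ZMod p) ^ m) ^ 4 ≠ 1 := by
    intro hcon
    have : (g ^ (4 * m) : (ZMod p)ˣ) = 1 := by
      ext
      push_cast
      calc ((g : ZMod p)) ^ (4 * m) = ((g : ZMod p) ^ m) ^ 4 := by ring
      _ = 1 := hcon
    have hdvd : orderOf g ∣ 4 * m := orderOf_dvd_of_pow_eq_one this
    rw [hcard, hm] at hdvd
    have := Nat.le_of_dvd (by omega) hdvd
    omega
  rcases aux_sq_eq_one (((g : ZMod p) ^ m) ^ 4) h2 with h | h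
  · exact absurd h hne
  · exact h


section
variable (p α : ℕ) {q : ℕ}

private lemma aux_neg_one (hp : p.Prime) (hp8 : p % 8 = 1) (hα : 1 ≤ α) (hq : q = p ^ α)
    [NeZero q] (hd : p ∣ q) (ψ : DirichletCharacter ℂ q) (hψ4 : ψ ^ 4 = 1) :
    ψ (-1) = 1 := by
  haveI : NeZero p := ⟨hp.pos.ne'⟩
  obtain ⟨h₀, hh₀⟩ := aux_fourth_root p hp hp8
  obtain ⟨h, hh⟩ := ZMod.unitsMap_surjective (n := p) hd h₀
  set c : ZMod q := (h : ZMod q) with hc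
  have hπc : ZMod.castHom hd (ZMod p) c = (h₀ : ZMod p) := by
    rw [hc, ← hh]; rfl
  have hu : IsUnit (-(c ^ 4)) := (h.isUnit.pow 4).neg
  have hπu : ZMod.castHom hd (ZMod p) (-(c ^ 4)) = 1 := by
    rw [map_neg, map_pow, hπc, hh₀]; ring
  have h1 : ψ (-(c ^ 4)) = 1 := aux_triv p α hp (by omega) hα hq hd ψ hψ4 _ hu hπu
  have h2 : ψ (-(c ^ 4)) = ψ (-1) * ψ (c ^ 4) := by
    rw [show -(c ^ 4) = (-1) * c ^ 4 by ring, map_mul]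
  have h3 : ψ (c ^ 4) = 1 := by
    rw [map_pow, ← MulChar.pow_apply' ψ (by norm_num : (4 : ℕ) ≠ 0) c, hψ4,
      MulChar.one_apply h.isUnit]
  rw [h1, h3, mul_one] at h2
  exact h2.symm

private lemma aux_jacobi_one (hp : p.Prime) (hp2 : p % 2 = 1) (hα : 1 ≤ α) (hq : q = p ^ α)
    [NeZero q] (hd : p ∣ q) (ψ : DirichletCharacter ℂ q) (hψ4 : ψ ^ 4 = 1) (hψ1 : ψ ≠ 1) :
    jacobiSum (1 : DirichletCharacter ℂ q) ψ = -(p : ℂ) ^ (α - 1) := by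
  haveI : NeZero p := ⟨hp.pos.ne'⟩
  haveI : Fact p.Prime := ⟨hp⟩
  set π := ZMod.castHom hd (ZMod p) with hπ
  have key : ∀ y : ZMod q, (1 : DirichletCharacter ℂ q) y * ψ (1 - y)
      = ψ (1 - y) - (if π y = 0 then (1 : ℂ) else 0) := by
    intro y
    by_cases hy : IsUnit y
    · rw [MulChar.one_apply hy, one_mul,
        if_neg ((aux_isUnit p α hp hα hq hd y).mp hy), sub_zero]
    · have h0 : π y = 0 := by
        by_contra hcon
        exact hy ((aux_isUnit p α hp hα hq hd y).mpr hcon)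
      have hun : IsUnit (1 - y) := by
        rw [aux_isUnit p α hp hα hq hd, map_sub, map_one, show ZMod.castHom hd (ZMod p) y = 0 from h0, sub_zero]
        exact one_ne_zero
      have hπ1 : π (1 - y) = 1 := by
        rw [map_sub, map_one, h0, sub_zero]
      have hone : ψ (1 - y) = 1 :=
        aux_triv p α hp hp2 hα hq hd ψ hψ4 _ hun hπ1
      rw [MulChar.map_nonunit _ hy, zero_mul, hone, if_pos h0]
      ring
  rw [jacobiSum]
  simp only [key]
  rw [Finset.sum_sub_distrib]
  have h1 : ∑ y : ZMod q, ψ (1 - y) = 0 := by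
    have he := Equiv.sum_comp (Equiv.subLeft (1 : ZMod q)) (fun z => ψ z)
    simp only [Equiv.subLeft_apply] at he
    rw [he]
    exact MulChar.sum_eq_zero_of_ne_one hψ1
  have h2 : ∑ y : ZMod q, (if π y = 0 then (1 : ℂ) else 0) = (p : ℂ) ^ (α - 1) := by
    have hfs := aux_fiber_sum p α hp hα hq hd (fun c : ZMod p => if c = 0 then (1 : ℂ) else 0)
    rw [hfs, Finset.sum_ite_eq' Finset.univ (0 : ZMod p) (fun _ => (1 : ℂ))]
    simp
  rw [h1, h2]
  ring

end


section
variable (p α : ℕ) {q : ℕ}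
private lemma aux_main (hp : p.Prime) (hp2 : p % 2 = 1) (hα : 1 ≤ α) (hq : q = p ^ α)
    [NeZero q] (hd : p ∣ q) (A B ψ : DirichletCharacter ℂ q)
    (hψ4 : ψ ^ 4 = 1) (hψ1 : ψ ≠ 1) (hψn : ψ (-1) = 1) :
    (∑ x : ZMod q, ∑ y : ZMod q,
      if IsUnit x ∧ IsUnit (1 - x) ∧ IsUnit y ∧ IsUnit (1 - y) ∧ IsUnit (x - y) then
        A y * B (1 - y) * ψ (x - y)
      else 0)
    = -(p : ℂ) ^ (α - 1) * (jacobiSum (A * ψ) B + jacobiSum A (B * ψ)) := by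
  haveI : NeZero p := ⟨hp.pos.ne'⟩
  haveI : Fact p.Prime := ⟨hp⟩
  set π := ZMod.castHom hd (ZMod p) with hπ
  have step1 : ∀ x y : ZMod q,
      (if IsUnit x ∧ IsUnit (1 - x) ∧ IsUnit y ∧ IsUnit (1 - y) ∧ IsUnit (x - y) then
        A y * B (1 - y) * ψ (x - y) else 0)
      = A y * B (1 - y) * (if IsUnit x ∧ IsUnit (1 - x) then ψ (x - y) else 0) := by
    intro x y
    by_cases hx : IsUnit x ∧ IsUnit (1 - x)
    · rw [if_pos hx]
      by_cases hy : IsUnit y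
      · by_cases h1y : IsUnit (1 - y)
        · by_cases hxy : IsUnit (x - y)
          · rw [if_pos ⟨hx.1, hx.2, hy, h1y, hxy⟩]
          · rw [if_neg (by tauto), ψ.map_nonunit hxy, mul_zero]
        · rw [if_neg (by tauto), B.map_nonunit h1y]; ring
      · rw [if_neg (by tauto), A.map_nonunit hy]; ring
    · rw [if_neg (by tauto), if_neg hx, mul_zero]
  simp only [step1]
  rw [Finset.sum_comm]
  have step2 : ∀ y : ZMod q,
      (∑ x : ZMod q, if IsUnit x ∧ IsUnit (1 - x) then ψ (x - y) else 0)
      = -(p : ℂ) ^ (α - 1) * (ψ (-y) + ψ (1 - y)) := by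
    intro y
    set F : ZMod p → ℂ := fun c => ψ ((c.val : ZMod q)) with hF
    have hFπ : ∀ z : ZMod q, F (π z) = ψ z := by
      intro z
      refine aux_factor p α hp hp2 hα hq hd ψ hψ4 _ _ ?_
      rw [map_natCast]
      exact ZMod.natCast_rightInverse (π z)
    have hsummand : ∀ x : ZMod q,
        (if IsUnit x ∧ IsUnit (1 - x) then ψ (x - y) else 0)
        = (fun c : ZMod p => if c ≠ 0 ∧ c ≠ 1 then F (c - π y) else 0) (π x) := by
      intro x
      have h1 : IsUnit x ↔ π x ≠ 0 := aux_isUnit p α hp hα hq hd x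
      have h2 : IsUnit (1 - x) ↔ π x ≠ 1 := by
        rw [aux_isUnit p α hp hα hq hd, map_sub, map_one, sub_ne_zero]
        exact ne_comm
      simp only []
      by_cases h : IsUnit x ∧ IsUnit (1 - x)
      · rw [if_pos h, if_pos ⟨h1.mp h.1, h2.mp h.2⟩, ← map_sub, hFπ]
      · rw [if_neg h, if_neg (by rw [← h1, ← h2] at *; tauto)]
    have hFsum : ∑ c : ZMod p, F c = 0 := by
      have h0 : ∑ z : ZMod q, ψ z = 0 := MulChar.sum_eq_zero_of_ne_one hψ1
      have h1 : ∑ s : ZMod q, F (π s) = (p : ℂ) ^ (α - 1) * ∑ c : ZMod p, F c :=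
        aux_fiber_sum p α hp hα hq hd F
      simp only [hFπ, h0] at h1
      have hp0 : ((p : ℂ)) ^ (α - 1) ≠ 0 := pow_ne_zero _ (Nat.cast_ne_zero.mpr hp.pos.ne')
      exact ((mul_eq_zero.mp h1.symm).resolve_left hp0)
    have hsum2 : (∑ c : ZMod p, if c ≠ 0 ∧ c ≠ 1 then F (c - π y) else 0)
        = -(F (0 - π y)) - F (1 - π y) := by
      have hptw : ∀ c : ZMod p, (if c ≠ 0 ∧ c ≠ 1 then F (c - π y) else 0)
          = F (c - π y) - (if c = 0 then F (c - π y) else 0)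
            - (if c = 1 then F (c - π y) else 0) := by
        intro c
        by_cases h0 : c = 0
        · subst h0
          rw [if_neg (by tauto), if_pos rfl, if_neg (zero_ne_one (α := ZMod p))]
          ring
        · by_cases h1 : c = 1
          · subst h1
            rw [if_neg (by tauto), if_neg (by exact one_ne_zero), if_pos rfl]
            ring
          · rw [if_pos ⟨h0, h1⟩, if_neg h0, if_neg h1]
            ring
      simp only [hptw]
      rw [Finset.sum_sub_distrib, Finset.sum_sub_distrib,
        Finset.sum_ite_eq' Finset.univ (0 : ZMod p) (fun c => F (c - π y)),
        Finset.sum_ite_eq' Finset.univ (1 : ZMod p) (fun c => F (c - π y))]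
      have he := Equiv.sum_comp (Equiv.subRight (π y)) F
      simp only [Equiv.subRight_apply] at he
      rw [he, hFsum]
      simp
    calc (∑ x : ZMod q, if IsUnit x ∧ IsUnit (1 - x) then ψ (x - y) else 0)
        = ∑ x : ZMod q, (fun c : ZMod p => if c ≠ 0 ∧ c ≠ 1 then F (c - π y) else 0) (π x) := by
          simp only [hsummand]
    _ = (p : ℂ) ^ (α - 1) * ∑ c : ZMod p, (if c ≠ 0 ∧ c ≠ 1 then F (c - π y) else 0) := by
          rw [hπ]
          exact aux_fiber_sum p α hp hα hq hd
            (fun c : ZMod p => if c ≠ 0 ∧ c ≠ 1 then F (c - ZMod.castHom hd (ZMod p) y) else 0)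
    _ = (p : ℂ) ^ (α - 1) * (-(F (0 - π y)) - F (1 - π y)) := by rw [hsum2]
    _ = -(p : ℂ) ^ (α - 1) * (ψ (-y) + ψ (1 - y)) := by
          have e1 : F (0 - π y) = ψ (-y) := by
            rw [show (0 : ZMod p) - π y = π (-y) by rw [map_neg]; ring, hFπ]
          have e2 : F (1 - π y) = ψ (1 - y) := by
            rw [show (1 : ZMod p) - π y = π (1 - y) by rw [map_sub, map_one], hFπ]
          rw [e1, e2]; ring
  have step3 : ∀ y : ZMod q,
      (∑ x : ZMod q, A y * B (1 - y) * (if IsUnit x ∧ IsUnit (1 - x) then ψ (x - y) else 0))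
      = A y * B (1 - y) * (-(p : ℂ) ^ (α - 1) * (ψ (-y) + ψ (1 - y))) := by
    intro y
    rw [← Finset.mul_sum, step2 y]
  simp only [step3]
  rw [jacobiSum, jacobiSum, ← Finset.sum_add_distrib, Finset.mul_sum]
  refine Finset.sum_congr rfl fun y _ => ?_
  have hnegy : ψ (-y) = ψ y := by
    rw [show -y = -1 * y by ring, map_mul, hψn, one_mul]
  rw [hnegy, MulChar.mul_apply, MulChar.mul_apply]
  ring

end

open scoped Classical in
theorem double_char_sums (p α : ℕ) (hp : p.Prime) (hp8 : p % 8 = 1) (hα : 1 ≤ α)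
    (q : ℕ) (hq : q = p ^ α) [NeZero q]
    (χ₄ : DirichletCharacter ℂ q) (hord : orderOf χ₄ = 4) :
    let ξ : ℂ := jacobiSum χ₄ (χ₄ ^ 2)
    let S : ℤ → ℤ → ℤ → ℂ := fun i₁ i₂ i₃ =>
      ∑ x : ZMod q, ∑ y : ZMod q,
        if IsUnit x ∧ IsUnit (1 - x) ∧ IsUnit y ∧ IsUnit (1 - y) ∧ IsUnit (x - y) then
          (χ₄ ^ i₁) y * (χ₄ ^ i₂) (1 - y) * (χ₄ ^ i₃) (x - y)
        else 0
    S 1 1 1 = -2 * ξ * (p : ℂ) ^ (α - 1) ∧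
    S 1 1 (-1) = 2 * (p : ℂ) ^ (2 * α - 2) ∧
    S 1 (-1) 1 = -(p : ℂ) ^ (α - 1) * ((starRingEnd ℂ) ξ - (p : ℂ) ^ (α - 1)) ∧
    S 1 (-1) (-1) = -(p : ℂ) ^ (α - 1) * (ξ - (p : ℂ) ^ (α - 1)) := by
  intro ξ S
  have hd : p ∣ q := hq ▸ dvd_pow_self p (by omega)
  have hp2 : p % 2 = 1 := by
    have := hp.two_le
    omega
  have hχ4 : χ₄ ^ 4 = 1 := by rw [← hord]; exact pow_orderOf_eq_one χ₄
  have hχ1 : χ₄ ≠ 1 := by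
    intro h
    rw [h, orderOf_one] at hord
    omega
  have hinv4 : (χ₄⁻¹) ^ 4 = 1 := by rw [inv_pow, hχ4, inv_one]
  have hinv1 : χ₄⁻¹ ≠ 1 := fun h => hχ1 (inv_eq_one.mp h)
  have hneg : χ₄ (-1) = 1 := aux_neg_one p α hp hp8 hα hq hd χ₄ hχ4
  have hneginv : χ₄⁻¹ (-1) = 1 := aux_neg_one p α hp hp8 hα hq hd χ₄⁻¹ hinv4
  have hsq : χ₄ * χ₄ = χ₄ ^ 2 := (sq χ₄).symm
  have hmi : χ₄ * χ₄⁻¹ = 1 := mul_inv_cancel χ₄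
  have him : χ₄⁻¹ * χ₄ = 1 := inv_mul_cancel χ₄
  have hsqinv : (χ₄ ^ 2)⁻¹ = χ₄ ^ 2 := by
    refine inv_eq_of_mul_eq_one_right ?_
    rw [← pow_add]
    norm_num
    exact hχ4
  have hii : χ₄⁻¹ * χ₄⁻¹ = χ₄ ^ 2 := by
    rw [← mul_inv, hsq, hsqinv]
  have hJ1 : jacobiSum (1 : DirichletCharacter ℂ q) χ₄ = -(p : ℂ) ^ (α - 1) :=
    aux_jacobi_one p α hp hp2 hα hq hd χ₄ hχ4 hχ1
  have hJ1' : jacobiSum χ₄ (1 : DirichletCharacter ℂ q) = -(p : ℂ) ^ (α - 1) := by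
    rw [jacobiSum_comm]; exact hJ1
  have hJ1inv : jacobiSum (1 : DirichletCharacter ℂ q) χ₄⁻¹ = -(p : ℂ) ^ (α - 1) :=
    aux_jacobi_one p α hp hp2 hα hq hd χ₄⁻¹ hinv4 hinv1
  have hconj : (starRingEnd ℂ) ξ = jacobiSum (χ₄ ^ 2) χ₄⁻¹ := by
    show (starRingEnd ℂ) (jacobiSum χ₄ (χ₄ ^ 2)) = _
    rw [jacobiSum_comm (χ₄ ^ 2) χ₄⁻¹, jacobiSum, jacobiSum, map_sum]
    refine Finset.sum_congr rfl fun y _ => ?_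
    rw [map_mul, starRingEnd_apply, starRingEnd_apply, MulChar.star_apply', MulChar.star_apply',
      hsqinv]
  refine ⟨?_, ?_, ?_, ?_⟩
  · show (∑ x : ZMod q, ∑ y : ZMod q,
        if IsUnit x ∧ IsUnit (1 - x) ∧ IsUnit y ∧ IsUnit (1 - y) ∧ IsUnit (x - y) then
          (χ₄ ^ (1 : ℤ)) y * (χ₄ ^ (1 : ℤ)) (1 - y) * (χ₄ ^ (1 : ℤ)) (x - y)
        else 0) = -2 * jacobiSum χ₄ (χ₄ ^ 2) * (p : ℂ) ^ (α - 1)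
    simp only [zpow_one]
    rw [aux_main p α hp hp2 hα hq hd χ₄ χ₄ χ₄ hχ4 hχ1 hneg, hsq,
      jacobiSum_comm (χ₄ ^ 2) χ₄]
    ring
  · show (∑ x : ZMod q, ∑ y : ZMod q,
        if IsUnit x ∧ IsUnit (1 - x) ∧ IsUnit y ∧ IsUnit (1 - y) ∧ IsUnit (x - y) then
          (χ₄ ^ (1 : ℤ)) y * (χ₄ ^ (1 : ℤ)) (1 - y) * (χ₄ ^ (-1 : ℤ)) (x - y)
        else 0) = 2 * (p : ℂ) ^ (2 * α - 2)
    simp only [zpow_one, zpow_neg_one]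
    rw [aux_main p α hp hp2 hα hq hd χ₄ χ₄ χ₄⁻¹ hinv4 hinv1 hneginv, hmi, hJ1, hJ1',
      show 2 * α - 2 = (α - 1) + (α - 1) by omega, pow_add]
    ring
  · show (∑ x : ZMod q, ∑ y : ZMod q,
        if IsUnit x ∧ IsUnit (1 - x) ∧ IsUnit y ∧ IsUnit (1 - y) ∧ IsUnit (x - y) then
          (χ₄ ^ (1 : ℤ)) y * (χ₄ ^ (-1 : ℤ)) (1 - y) * (χ₄ ^ (1 : ℤ)) (x - y)
        else 0) = -(p : ℂ) ^ (α - 1) * ((starRingEnd ℂ) ξ - (p : ℂ) ^ (α - 1))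
    simp only [zpow_one, zpow_neg_one]
    rw [aux_main p α hp hp2 hα hq hd χ₄ χ₄⁻¹ χ₄ hχ4 hχ1 hneg, hsq, him, hJ1', hconj]
    ring
  · show (∑ x : ZMod q, ∑ y : ZMod q,
        if IsUnit x ∧ IsUnit (1 - x) ∧ IsUnit y ∧ IsUnit (1 - y) ∧ IsUnit (x - y) then
          (χ₄ ^ (1 : ℤ)) y * (χ₄ ^ (-1 : ℤ)) (1 - y) * (χ₄ ^ (-1 : ℤ)) (x - y)
        else 0) = -(p : ℂ) ^ (α - 1) * (jacobiSum χ₄ (χ₄ ^ 2) - (p : ℂ) ^ (α - 1))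
    simp only [zpow_one, zpow_neg_one]
    rw [aux_main p α hp hp2 hα hq hd χ₄ χ₄⁻¹ χ₄⁻¹ hinv4 hinv1 hneginv, hmi, hii, hJ1inv]
    ring
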